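/- Let Σ = (A,B,C,D; X,U,Y) be a passive system and Σ₁ = (A₁,B₁,C₁,D₁; X₁,U,Y) a co-isometric system (T₁∘T₁* = I) on complex Hilbert spaces, realizing the same transfer function, i.e. D = D₁ and C∘Aⁿ∘B = C₁∘A₁ⁿ∘B₁ for all n ≥ 0. Then for every n ≥ 0 and all y₀,…,yₙ ∈ Y: ‖∑_{k=0}^{n} (A*)ᵏ(C* yₖ)‖ ≤ ‖∑_{k=0}^{n} (A₁*)ᵏ(C₁* yₖ)‖. -/

import Mathlib

/-!
STATEMENT 9: If Σ = (A,B,C,D;X,U,Y) is passive and Σ₁ = (A₁,B₁,C₁,D₁;X₁,U,Y) is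
co-isometric (T₁∘T₁* = I), and they realize the same transfer function, then
‖∑ₖ (A*)ᵏ(C*yₖ)‖ ≤ ‖∑ₖ (A₁*)ᵏ(C₁*yₖ)‖ for all finite families yₖ in Y.
-/

noncomputable section

open ContinuousLinearMap

variable {X X₁ U Y : Type*}
  [NormedAddCommGroup X] [InnerProductSpace ℂ X] [CompleteSpace X]
  [NormedAddCommGroup X₁] [InnerProductSpace ℂ X₁] [CompleteSpace X₁]
  [NormedAddCommGroup U] [InnerProductSpace ℂ U] [CompleteSpace U]
  [NormedAddCommGroup Y] [InnerProductSpace ℂ Y] [CompleteSpace Y]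

/-- The system operator `T(x,u) = (Ax + Bu, Cx + Du)` as a block operator between the
Hilbert space direct sums. -/
def sysOp {W : Type*} [NormedAddCommGroup W] [InnerProductSpace ℂ W] [CompleteSpace W]
    (A : W →L[ℂ] W) (B : U →L[ℂ] W) (C : W →L[ℂ] Y) (D : U →L[ℂ] Y) :
    WithLp 2 (W × U) →L[ℂ] WithLp 2 (W × Y) :=
  (((WithLp.prodContinuousLinearEquiv 2 ℂ W Y).symm : (W × Y) →L[ℂ] WithLp 2 (W × Y)).comp
      ((A.comp (fst ℂ W U) + B.comp (snd ℂ W U)).prod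
        (C.comp (fst ℂ W U) + D.comp (snd ℂ W U)))).comp
    ((WithLp.prodContinuousLinearEquiv 2 ℂ W U : WithLp 2 (W × U) →L[ℂ] (W × U)))

set_option linter.unusedSectionVars false

open scoped ComplexInnerProductSpace
set_option maxHeartbeats 1000000

lemma sysOp_apply' {W : Type*} [NormedAddCommGroup W] [InnerProductSpace ℂ W] [CompleteSpace W]
    (A : W →L[ℂ] W) (B : U →L[ℂ] W) (C : W →L[ℂ] Y) (D : U →L[ℂ] Y)
    (p : WithLp 2 (W × U)) :
    sysOp A B C D p = (WithLp.prodContinuousLinearEquiv 2 ℂ W Y).symm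
      (A p.fst + B p.snd, C p.fst + D p.snd) := rfl

lemma adjoint_sysOp' {W : Type*} [NormedAddCommGroup W] [InnerProductSpace ℂ W] [CompleteSpace W]
    (A : W →L[ℂ] W) (B : U →L[ℂ] W) (C : W →L[ℂ] Y) (D : U →L[ℂ] Y) :
    adjoint (sysOp A B C D) = sysOp (adjoint A) (adjoint C) (adjoint B) (adjoint D) := by
  symm
  rw [eq_adjoint_iff]
  intro p q
  simp only [sysOp_apply', WithLp.prod_inner_apply, WithLp.toLp_fst, WithLp.toLp_snd, WithLp.ofLp_fst, WithLp.ofLp_snd,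
    WithLp.prodContinuousLinearEquiv_symm_apply, inner_add_left, inner_add_right,
    adjoint_inner_left]
  ring

/-- Pointwise contraction inequality for block operators. -/
lemma sysOp_step_le {W : Type*} [NormedAddCommGroup W] [InnerProductSpace ℂ W] [CompleteSpace W]
    (A : W →L[ℂ] W) (B : U →L[ℂ] W) (C : W →L[ℂ] Y) (D : U →L[ℂ] Y)
    (h : ‖sysOp A B C D‖ ≤ 1) (x : W) (u : U) :
    ‖A x + B u‖ ^ 2 + ‖C x + D u‖ ^ 2 ≤ ‖x‖ ^ 2 + ‖u‖ ^ 2 := by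
  set p : WithLp 2 (W × U) := (WithLp.prodContinuousLinearEquiv 2 ℂ W U).symm (x, u) with hp
  have h1 : ‖sysOp A B C D p‖ ≤ ‖p‖ := by
    calc ‖sysOp A B C D p‖ ≤ ‖sysOp A B C D‖ * ‖p‖ := le_opNorm _ _
    _ ≤ 1 * ‖p‖ := mul_le_mul_of_nonneg_right h (norm_nonneg p)
    _ = ‖p‖ := one_mul _
  have h2 := pow_le_pow_left₀ (norm_nonneg _) h1 2
  rw [WithLp.prod_norm_sq_eq_of_L2, WithLp.prod_norm_sq_eq_of_L2] at h2
  simp only [sysOp_apply', hp, WithLp.prodContinuousLinearEquiv_symm_apply,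
    WithLp.toLp_fst, WithLp.toLp_snd, WithLp.ofLp_fst, WithLp.ofLp_snd] at h2
  exact h2

/-- Pointwise isometry equality for block operators. -/
lemma sysOp_step_eq {W : Type*} [NormedAddCommGroup W] [InnerProductSpace ℂ W] [CompleteSpace W]
    (A : W →L[ℂ] W) (B : U →L[ℂ] W) (C : W →L[ℂ] Y) (D : U →L[ℂ] Y)
    (h : ∀ v, ‖sysOp A B C D v‖ ^ 2 = ‖v‖ ^ 2) (x : W) (u : U) :
    ‖A x + B u‖ ^ 2 + ‖C x + D u‖ ^ 2 = ‖x‖ ^ 2 + ‖u‖ ^ 2 := by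
  set p : WithLp 2 (W × U) := (WithLp.prodContinuousLinearEquiv 2 ℂ W U).symm (x, u) with hp
  have h2 := h p
  rw [WithLp.prod_norm_sq_eq_of_L2, WithLp.prod_norm_sq_eq_of_L2] at h2
  simp only [sysOp_apply', hp, WithLp.prodContinuousLinearEquiv_symm_apply,
    WithLp.toLp_fst, WithLp.toLp_snd, WithLp.ofLp_fst, WithLp.ofLp_snd] at h2
  exact h2

lemma state_formula' {W : Type*} [NormedAddCommGroup W] [InnerProductSpace ℂ W]
    (A : W →L[ℂ] W) (Bc : Y →L[ℂ] W) (v : ℕ → Y)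
    (xs : ℕ → W) (h0 : xs 0 = 0) (hs : ∀ j, xs (j + 1) = A (xs j) + Bc (v j)) :
    ∀ j, xs j = ∑ i ∈ Finset.range j, (A ^ (j - 1 - i)) (Bc (v i)) := by
  intro j
  induction j with
  | zero => simpa using h0
  | succ j ih =>
    rw [hs j, ih, Finset.sum_range_succ]
    simp only [map_sum]
    congr 1
    · apply Finset.sum_congr rfl
      intro i hi
      have hi' : i < j := Finset.mem_range.mp hi
      have he : j + 1 - 1 - i = (j - 1 - i) + 1 := by omega
      rw [he, pow_succ', mul_apply_eq_comp]
    · have he : j + 1 - 1 - j = 0 := by omega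
      simp [he]

lemma energy_le' {W : Type*} [NormedAddCommGroup W] [InnerProductSpace ℂ W]
    (A : W →L[ℂ] W) (Bc : Y →L[ℂ] W) (Cc : W →L[ℂ] U) (Dc : Y →L[ℂ] U)
    (h : ∀ x v, ‖A x + Bc v‖ ^ 2 + ‖Cc x + Dc v‖ ^ 2 ≤ ‖x‖ ^ 2 + ‖v‖ ^ 2)
    (v : ℕ → Y) (xs : ℕ → W) (h0 : xs 0 = 0)
    (hs : ∀ j, xs (j + 1) = A (xs j) + Bc (v j)) (m : ℕ) :
    ‖xs m‖ ^ 2 + ∑ j ∈ Finset.range m, ‖Cc (xs j) + Dc (v j)‖ ^ 2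
      ≤ ∑ j ∈ Finset.range m, ‖v j‖ ^ 2 := by
  induction m with
  | zero => simp [h0]
  | succ m ih =>
    rw [Finset.sum_range_succ, Finset.sum_range_succ]
    have hh := h (xs m) (v m)
    rw [← hs m] at hh
    linarith

lemma energy_eq' {W : Type*} [NormedAddCommGroup W] [InnerProductSpace ℂ W]
    (A : W →L[ℂ] W) (Bc : Y →L[ℂ] W) (Cc : W →L[ℂ] U) (Dc : Y →L[ℂ] U)
    (h : ∀ x v, ‖A x + Bc v‖ ^ 2 + ‖Cc x + Dc v‖ ^ 2 = ‖x‖ ^ 2 + ‖v‖ ^ 2)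
    (v : ℕ → Y) (xs : ℕ → W) (h0 : xs 0 = 0)
    (hs : ∀ j, xs (j + 1) = A (xs j) + Bc (v j)) (m : ℕ) :
    ‖xs m‖ ^ 2 + ∑ j ∈ Finset.range m, ‖Cc (xs j) + Dc (v j)‖ ^ 2
      = ∑ j ∈ Finset.range m, ‖v j‖ ^ 2 := by
  induction m with
  | zero => simp [h0]
  | succ m ih =>
    rw [Finset.sum_range_succ, Finset.sum_range_succ]
    have hh := h (xs m) (v m)
    rw [← hs m] at hh
    linarith

/-- The state trajectory with zero initial state. -/
def traj {W : Type*} [NormedAddCommGroup W] [InnerProductSpace ℂ W] [CompleteSpace W]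
    (A : W →L[ℂ] W) (Bc : Y →L[ℂ] W) (v : ℕ → Y) : ℕ → W
  | 0 => 0
  | j + 1 => A (traj A Bc v j) + Bc (v j)

lemma adjoint_pow' {W : Type*} [NormedAddCommGroup W] [InnerProductSpace ℂ W] [CompleteSpace W]
    (A : W →L[ℂ] W) (m : ℕ) : (adjoint A) ^ m = adjoint (A ^ m) := by
  induction m with
  | zero =>
    simp only [pow_zero]
    exact adjoint_id.symm
  | succ m ih =>
    rw [pow_succ, ih, pow_succ']
    show adjoint (A ^ m) ∘L adjoint A = adjoint (A ∘L A ^ m)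
    exact (adjoint_comp A (A ^ m)).symm

lemma adjoint_triple {W : Type*} [NormedAddCommGroup W] [InnerProductSpace ℂ W] [CompleteSpace W]
    (A' : W →L[ℂ] W) (B' : U →L[ℂ] W) (C' : W →L[ℂ] Y) (m : ℕ) :
    (adjoint B').comp ((adjoint (A' ^ m)).comp (adjoint C'))
      = adjoint (C'.comp ((A' ^ m).comp B')) := by
  rw [adjoint_comp C' ((A' ^ m).comp B'), adjoint_comp (A' ^ m) B',
    comp_assoc (adjoint B') (adjoint (A' ^ m)) (adjoint C')]

lemma final_state {W : Type*} [NormedAddCommGroup W] [InnerProductSpace ℂ W]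
    (Aa : W →L[ℂ] W) (Ba : Y →L[ℂ] W) (n : ℕ) (y : Fin (n + 1) → Y) (zs : ℕ → W)
    (hz0 : zs 0 = 0)
    (hzs : ∀ j, zs (j + 1) = Aa (zs j) + Ba (y ⟨n - j, Nat.lt_succ_of_le (Nat.sub_le n j)⟩)) :
    zs (n + 1) = ∑ k : Fin (n + 1), (Aa ^ (k : ℕ)) (Ba (y k)) := by
  rw [state_formula' Aa Ba (fun j => y ⟨n - j, Nat.lt_succ_of_le (Nat.sub_le n j)⟩) zs hz0 hzs
    (n + 1)]
  set G : ℕ → W := fun m =>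
    if h : m < n + 1 then (Aa ^ m) (Ba (y ⟨m, h⟩)) else 0 with hG
  have step1 : ∀ i ∈ Finset.range (n + 1),
      (Aa ^ (n + 1 - 1 - i)) (Ba (y ⟨n - i, Nat.lt_succ_of_le (Nat.sub_le n i)⟩))
        = G (n + 1 - 1 - i) := by
    intro i hi
    have hlt : n + 1 - 1 - i < n + 1 := by omega
    rw [hG]
    simp only
    rw [dif_pos hlt]
    simp only [Nat.add_sub_cancel]
  rw [Finset.sum_congr rfl step1, Finset.sum_range_reflect G (n + 1),
    ← Fin.sum_univ_eq_sum_range G (n + 1)]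
  apply Finset.sum_congr rfl
  intro k _
  rw [hG]
  simp only
  rw [dif_pos k.isLt]

theorem statement9 (A : X →L[ℂ] X) (B : U →L[ℂ] X) (C : X →L[ℂ] Y) (D : U →L[ℂ] Y)
    (A₁ : X₁ →L[ℂ] X₁) (B₁ : U →L[ℂ] X₁) (C₁ : X₁ →L[ℂ] Y) (D₁ : U →L[ℂ] Y)
    (hpass : ‖sysOp A B C D‖ ≤ 1)
    (hcoiso : (sysOp A₁ B₁ C₁ D₁).comp (ContinuousLinearMap.adjoint (sysOp A₁ B₁ C₁ D₁))
      = ContinuousLinearMap.id ℂ (WithLp 2 (X₁ × Y)))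
    (hD : D = D₁)
    (hmom : ∀ n : ℕ, C.comp ((A ^ n).comp B) = C₁.comp ((A₁ ^ n).comp B₁))
    (n : ℕ) (y : Fin (n + 1) → Y) :
    ‖∑ k : Fin (n + 1), ((ContinuousLinearMap.adjoint A) ^ (k : ℕ))
        ((ContinuousLinearMap.adjoint C) (y k))‖
      ≤ ‖∑ k : Fin (n + 1), ((ContinuousLinearMap.adjoint A₁) ^ (k : ℕ))
        ((ContinuousLinearMap.adjoint C₁) (y k))‖ := by
  -- contraction step for the adjoint of Σ
  have hnorm : ‖sysOp (adjoint A) (adjoint C) (adjoint B) (adjoint D)‖ ≤ 1 := by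
    rw [← adjoint_sysOp']
    calc ‖adjoint (sysOp A B C D)‖ = ‖sysOp A B C D‖ :=
          LinearIsometryEquiv.norm_map adjoint (sysOp A B C D)
    _ ≤ 1 := hpass
  have hstep : ∀ x v, ‖adjoint A x + adjoint C v‖ ^ 2 + ‖adjoint B x + adjoint D v‖ ^ 2
      ≤ ‖x‖ ^ 2 + ‖v‖ ^ 2 :=
    sysOp_step_le (adjoint A) (adjoint C) (adjoint B) (adjoint D) hnorm
  -- isometry step for the adjoint of Σ₁
  have hiso : ∀ v, ‖sysOp (adjoint A₁) (adjoint C₁) (adjoint B₁) (adjoint D₁) v‖ ^ 2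
      = ‖v‖ ^ 2 := by
    intro v
    rw [← adjoint_sysOp']
    have h1 : (inner ℂ (adjoint (sysOp A₁ B₁ C₁ D₁) v) (adjoint (sysOp A₁ B₁ C₁ D₁) v) : ℂ)
        = (inner ℂ v v : ℂ) := by
      rw [adjoint_inner_left]
      congr 1
      have := congrArg (fun T => T v) hcoiso
      simpa using this
    rw [← inner_self_eq_norm_sq (𝕜 := ℂ), ← inner_self_eq_norm_sq (𝕜 := ℂ), h1]
  have hstep1 : ∀ x v, ‖adjoint A₁ x + adjoint C₁ v‖ ^ 2 + ‖adjoint B₁ x + adjoint D₁ v‖ ^ 2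
      = ‖x‖ ^ 2 + ‖v‖ ^ 2 :=
    sysOp_step_eq (adjoint A₁) (adjoint C₁) (adjoint B₁) (adjoint D₁) hiso
  -- the moment equality for the adjoint systems
  have hmomadj : ∀ (m : ℕ) (w : Y),
      adjoint B ((adjoint A ^ m) (adjoint C w)) = adjoint B₁ ((adjoint A₁ ^ m) (adjoint C₁ w)) := by
    intro m w
    have h2 : (adjoint B).comp ((adjoint (A ^ m)).comp (adjoint C))
        = (adjoint B₁).comp ((adjoint (A₁ ^ m)).comp (adjoint C₁)) := by
      rw [adjoint_triple A B C m, adjoint_triple A₁ B₁ C₁ m, hmom m]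
    rw [adjoint_pow', adjoint_pow']
    exact congrArg (fun T => T w) h2
  -- the reversed input sequence
  set yy : ℕ → Y := fun j => y ⟨n - j, Nat.lt_succ_of_le (Nat.sub_le n j)⟩ with hyy
  -- the two state trajectories
  set xs : ℕ → X := traj (adjoint A) (adjoint C) yy with hxs
  set xs₁ : ℕ → X₁ := traj (adjoint A₁) (adjoint C₁) yy with hxs₁
  have h0 : xs 0 = 0 := rfl
  have hsucc : ∀ j, xs (j + 1) = adjoint A (xs j) + adjoint C (yy j) := fun j => rfl
  have h01 : xs₁ 0 = 0 := rfl
  have hsucc1 : ∀ j, xs₁ (j + 1) = adjoint A₁ (xs₁ j) + adjoint C₁ (yy j) := fun j => rfl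
  -- the outputs coincide
  have hout : ∀ j, ‖adjoint B (xs j) + adjoint D (yy j)‖ ^ 2
      = ‖adjoint B₁ (xs₁ j) + adjoint D₁ (yy j)‖ ^ 2 := by
    intro j
    have hB : adjoint B (xs j) = adjoint B₁ (xs₁ j) := by
      rw [state_formula' (adjoint A) (adjoint C) yy xs h0 hsucc j,
        state_formula' (adjoint A₁) (adjoint C₁) yy xs₁ h01 hsucc1 j]
      simp only [map_sum]
      exact Finset.sum_congr rfl fun i _ => hmomadj (j - 1 - i) (yy i)
    rw [hB, hD]
  -- energy estimates
  have E1 := energy_le' (adjoint A) (adjoint C) (adjoint B) (adjoint D) hstep yy xs h0 hsucc (n + 1)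
  have E2 := energy_eq' (adjoint A₁) (adjoint C₁) (adjoint B₁) (adjoint D₁) hstep1 yy xs₁ h01
    hsucc1 (n + 1)
  have hW : ∑ j ∈ Finset.range (n + 1), ‖adjoint B (xs j) + adjoint D (yy j)‖ ^ 2
      = ∑ j ∈ Finset.range (n + 1), ‖adjoint B₁ (xs₁ j) + adjoint D₁ (yy j)‖ ^ 2 :=
    Finset.sum_congr rfl fun j _ => hout j
  have hsq : ‖xs (n + 1)‖ ^ 2 ≤ ‖xs₁ (n + 1)‖ ^ 2 := by linarith
  -- identify the final states with the sums in the statement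
  rw [final_state (adjoint A) (adjoint C) n y xs h0 hsucc,
    final_state (adjoint A₁) (adjoint C₁) n y xs₁ h01 hsucc1] at hsq
  nlinarith [norm_nonneg (∑ k : Fin (n + 1), ((adjoint A) ^ (k : ℕ)) ((adjoint C) (y k))),
    norm_nonneg (∑ k : Fin (n + 1), ((adjoint A₁) ^ (k : ℕ)) ((adjoint C₁) (y k)))]

end
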